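/- Let I ⊆ ℝ be an open interval and let f, g : I → ℝ be differentiable functions satisfying for all y ∈ I the system 18·f(y)·g(y) + (2y/√3)·f(y) + g'(y) = 0 and f'(y) − 9·f(y)² + 9·g(y)² − (2y/√3)·g(y) = 0. Define P : I → ℝ by P(y) := −6√3·g(y) − 2y/3, and assume P(y) ≠ 0 for all y ∈ I. Then P is twice differentiable on I and satisfies the Painlevé IV equation P''(y) = (P'(y))²/(2P(y)) + (3/2)·P(y)³ + 4y·P(y)² + 2y²·P(y) − 2/(9·P(y)), i.e., the Painlevé IV equation with parameters α = −1/6 and β = −2/3. -/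

import Mathlib

/-- If `(f,g)` solve the first-order system
`18fg + (2y/√3)f + g' = 0`, `f' − 9f² + 9g² − (2y/√3)g = 0` on an open
interval `I`, then `P(y) = −6√3·g(y) − 2y/3` (assumed nonvanishing on `I`) is
twice differentiable and satisfies the Painlevé IV equation
`P'' = (P')²/(2P) + (3/2)P³ + 4yP² + 2y²P − 2/(9P)`
(parameters `α = −1/6`, `β = −2/3`). -/
theorem system_to_painleve_IV
    (I : Set ℝ) (hIopen : IsOpen I) (hIconn : I.OrdConnected)
    (f g f' g' : ℝ → ℝ)
    (hf : ∀ y ∈ I, HasDerivAt f (f' y) y)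
    (hg : ∀ y ∈ I, HasDerivAt g (g' y) y)
    (heq1 : ∀ y ∈ I,
      18 * f y * g y + (2 * y / Real.sqrt 3) * f y + g' y = 0)
    (heq2 : ∀ y ∈ I,
      f' y - 9 * (f y)^2 + 9 * (g y)^2 - (2 * y / Real.sqrt 3) * g y = 0)
    (P : ℝ → ℝ)
    (hP : ∀ y, P y = -6 * Real.sqrt 3 * g y - 2 * y / 3)
    (hPne : ∀ y ∈ I, P y ≠ 0) :
    ∃ P' P'' : ℝ → ℝ,
      (∀ y ∈ I, HasDerivAt P (P' y) y) ∧
      (∀ y ∈ I, HasDerivAt P' (P'' y) y) ∧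
      (∀ y ∈ I, P'' y = (P' y)^2 / (2 * P y) + (3/2) * (P y)^3
        + 4 * y * (P y)^2 + 2 * y^2 * P y - 2 / (9 * P y)) := by
  have hs0 : Real.sqrt 3 ≠ 0 := by positivity
  have hs : Real.sqrt 3 * Real.sqrt 3 = 3 := Real.mul_self_sqrt (by norm_num)
  set s := Real.sqrt 3 with hsdef
  have hD1 : ∀ y ∈ I, HasDerivAt P (-18 * f y * P y - 2/3) y := by
    intro y hy
    have hPfun : P = fun y => -6 * s * g y - 2 * y / 3 := funext hP
    have hD : HasDerivAt P (-6 * s * g' y - 2 / 3) y := by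
      rw [hPfun]
      have := ((hg y hy).const_mul (-6 * s)).sub
        ((hasDerivAt_id y).const_mul 2 |>.div_const 3)
      simpa [mul_comm, Pi.sub_def] using this
    convert hD using 1
    have h1 := heq1 y hy
    have hPy := hP y
    field_simp at h1
    linear_combination (-18 * f y) * hPy + 6 * h1
  refine ⟨fun y => -18 * f y * P y - 2/3,
    fun y => -18 * f' y * P y - 18 * f y * (-18 * f y * P y - 2/3), hD1, ?_, ?_⟩
  · intro y hy
    have := (((hf y hy).const_mul (-18)).mul (hD1 y hy)).sub_const (2/3)
    convert this using 1
    · rfl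
    · rfl
    · rfl
    · ring
  · intro y hy
    have h2 := heq2 y hy
    have hPy := hP y
    have hne := hPne y hy
    have h2' : s * f' y - 9 * s * (f y)^2 + 9 * s * (g y)^2 - 2 * y * g y = 0 := by
      field_simp at h2
      linarith [h2]
    have hQ : s * g y = (-(P y) - 2 * y / 3) / 6 := by
      linear_combination (1/6) * hPy
    have hF'3 : f' y = 9 * (f y)^2 - 3 * (s * g y)^2 + (2 * y / 3) * (s * g y) := by
      apply mul_left_cancel₀ hs0
      linear_combination h2' + (3 * s * (g y)^2 - 2 * y / 3 * g y) * hs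
    rw [hQ] at hF'3
    show -18 * f' y * P y - 18 * f y * (-18 * f y * P y - 2/3)
      = (-18 * f y * P y - 2/3)^2 / (2 * P y) + (3/2) * (P y)^3
        + 4 * y * (P y)^2 + 2 * y^2 * P y - 2 / (9 * P y)
    rw [hF'3]
    field_simp
    ring
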